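/- Let c > 0 and C ≥ 0 be real constants and let μ be a probability measure on ℝ with μ((−∞, 0]) = 0 and ∫ log(1 + v) dμ(v) < ∞. Suppose R : ℝ → ℝ satisfies c·∫ log(1 + P·v) dμ(v) − C ≤ R(P) ≤ c·∫ log(1 + P·v) dμ(v) for all P ≥ 1. Then lim_{P→∞} R(P)/log P = c. -/

import Mathlib

open Filter MeasureTheory

/-- Abstract form of Theorem 5 of the paper (scaling law between CSI feedback
bits and feedback dimension): if a throughput `R` is sandwiched between
`c ∫ log (1 + P v) dμ(v) - C` and `c ∫ log (1 + P v) dμ(v)` for all SNR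
`P ≥ 1`, where `μ` is a probability measure supported on the positive reals
with `∫ log (1 + v) dμ(v) < ∞`, then `R(P)/log P → c`, i.e. the network
retains its full sum degrees of freedom `c = GKd`. -/
theorem sandwiched_throughput_dof
    (c C : ℝ) (hc : 0 < c) (hC : 0 ≤ C)
    (μ : Measure ℝ) [IsProbabilityMeasure μ]
    (h0 : μ (Set.Iic 0) = 0)
    (hint : Integrable (fun v => Real.log (1 + v)) μ)
    (R : ℝ → ℝ)
    (hR : ∀ P : ℝ, 1 ≤ P →
      c * (∫ v, Real.log (1 + P * v) ∂μ) - C ≤ R P ∧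
      R P ≤ c * (∫ v, Real.log (1 + P * v) ∂μ)) :
    Tendsto (fun P : ℝ => R P / Real.log P) atTop (nhds c) := by
  set A := ∫ v, Real.log (1 + v) ∂μ with hA
  set I := fun P : ℝ => ∫ v, Real.log (1 + P * v) ∂μ with hIdef
  have hpos : ∀ᵐ v ∂μ, 0 < v := by
    rw [ae_iff]
    convert h0 using 2
    ext v; simp [not_lt]
  have hmeas : ∀ P : ℝ, AEStronglyMeasurable (fun v => Real.log (1 + P * v)) μ :=
    fun P => (Real.measurable_log.comp (measurable_const.add
      (measurable_id.const_mul P))).aestronglyMeasurable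
  have hintP : ∀ P : ℝ, 1 ≤ P → Integrable (fun v => Real.log (1 + P * v)) μ := by
    intro P hP
    have hP0 : (0:ℝ) < P := lt_of_lt_of_le one_pos hP
    refine ((integrable_const (Real.log P)).add hint).mono' (hmeas P) ?_
    filter_upwards [hpos] with v hv
    have h1 : 0 ≤ Real.log (1 + P * v) := Real.log_nonneg (by nlinarith)
    have h2 : Real.log (1 + P * v) ≤ Real.log P + Real.log (1 + v) := by
      rw [← Real.log_mul (by positivity) (by positivity)]
      exact Real.log_le_log (by positivity) (by nlinarith)
    rw [Real.norm_eq_abs, abs_of_nonneg h1]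
    exact h2
  have hupper : ∀ P : ℝ, 1 ≤ P → I P ≤ Real.log P + A := by
    intro P hP
    have hP0 : (0:ℝ) < P := lt_of_lt_of_le one_pos hP
    have hle : (fun v => Real.log (1 + P * v)) ≤ᵐ[μ]
        fun v => Real.log P + Real.log (1 + v) := by
      filter_upwards [hpos] with v hv
      rw [← Real.log_mul (by positivity) (by positivity)]
      exact Real.log_le_log (by positivity) (by nlinarith)
    calc I P ≤ ∫ v, (Real.log P + Real.log (1 + v)) ∂μ :=
          integral_mono_ae (hintP P hP) ((integrable_const _).add hint) hle
      _ = Real.log P + A := by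
          rw [integral_add (integrable_const _) hint, integral_const, probReal_univ,
            one_smul]
  have hlower : ∀ δ : ℝ, 0 < δ → ∀ P : ℝ, 1 ≤ P → 1/δ ≤ P →
      (1 - (μ (Set.Iic δ)).toReal) * Real.log (P * δ) ≤ I P := by
    intro δ hδ P hP hPδ
    have hPδ1 : 1 ≤ P * δ := by
      rw [div_le_iff₀ hδ] at hPδ; linarith
    have hms : MeasurableSet (Set.Iic δ) := measurableSet_Iic
    have hμs : (μ (Set.Iic δ)ᶜ).toReal = 1 - (μ (Set.Iic δ)).toReal := by
      rw [prob_compl_eq_one_sub hms,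
        ENNReal.toReal_sub_of_le prob_le_one ENNReal.one_ne_top, ENNReal.toReal_one]
    have hnn : 0 ≤ᵐ[μ] fun v => Real.log (1 + P * v) := by
      filter_upwards [hpos] with v hv
      exact Real.log_nonneg (by nlinarith)
    calc (1 - (μ (Set.Iic δ)).toReal) * Real.log (P * δ)
        = Real.log (P * δ) * (μ (Set.Iic δ)ᶜ).toReal := by rw [hμs]; ring
      _ ≤ ∫ v in (Set.Iic δ)ᶜ, Real.log (1 + P * v) ∂μ := by
          rw [mul_comm (Real.log (P * δ)), ← smul_eq_mul, ← measureReal_def]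
          refine setIntegral_ge_of_const_le hms.compl (measure_ne_top μ _) ?_
            ((hintP P hP).integrableOn)
          intro x hx
          simp only [Set.mem_compl_iff, Set.mem_Iic, not_le] at hx
          exact Real.log_le_log (by positivity) (by nlinarith)
      _ ≤ I P := setIntegral_le_integral (hintP P hP) hnn
  have hloginv : Tendsto (fun P : ℝ => (Real.log P)⁻¹) atTop (nhds 0) :=
    Real.tendsto_log_atTop.inv_tendsto_atTop
  have hlogpos : ∀ᶠ P : ℝ in atTop, 0 < Real.log P := by
    filter_upwards [eventually_ge_atTop 2] with P hP
    exact Real.log_pos (by linarith)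
  -- main estimate: I P / log P → 1
  have key : Tendsto (fun P : ℝ => I P / Real.log P) atTop (nhds 1) := by
    rw [tendsto_order]
    constructor
    · intro a ha
      set ε := min ((1 - a)/2) (1/2) with hε
      have hε0 : 0 < ε := lt_min (by linarith) (by norm_num)
      have hε1 : ε ≤ 1/2 := min_le_right _ _
      have haε : a < 1 - ε := by
        rcases le_or_gt a 0 with h | h
        · linarith
        · have : ε ≤ (1 - a)/2 := min_le_left _ _
          linarith
      obtain ⟨δ, hδ0, hδm⟩ : ∃ δ : ℝ, 0 < δ ∧ (μ (Set.Iic δ)).toReal < ε := by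
        have hanti : Antitone (fun n : ℕ => Set.Iic (1/(n+1) : ℝ)) := by
          intro m n hmn
          apply Set.Iic_subset_Iic.2
          have hc : (m:ℝ) ≤ n := Nat.cast_le.2 hmn
          apply one_div_le_one_div_of_le (by positivity)
          linarith
        have hiInter : (⋂ n : ℕ, Set.Iic (1/(n+1) : ℝ)) = Set.Iic 0 := by
          ext x
          simp only [Set.mem_iInter, Set.mem_Iic]
          constructor
          · intro h
            by_contra hx
            push_neg at hx
            obtain ⟨n, hn⟩ := exists_nat_one_div_lt hx
            exact absurd (h n) (not_le.2 hn)
          · intro hx n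
            have : (0:ℝ) < 1/(n+1) := by positivity
            linarith
        have htm := tendsto_measure_iInter_atTop (μ := μ)
          (fun n => (measurableSet_Iic).nullMeasurableSet) hanti ⟨0, measure_ne_top μ _⟩
        rw [hiInter, h0] at htm
        have htm' : Tendsto (fun n : ℕ => (μ (Set.Iic (1/(n+1) : ℝ))).toReal)
            atTop (nhds 0) := by
          have := (ENNReal.tendsto_toReal ENNReal.zero_ne_top).comp htm
          simpa [Function.comp_def] using this
        obtain ⟨n, hn⟩ := (htm'.eventually_lt_const hε0).exists
        exact ⟨1/(n+1), by positivity, hn⟩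
      set m := (μ (Set.Iic δ)).toReal with hm
      have hm0 : 0 ≤ m := ENNReal.toReal_nonneg
      have htend : Tendsto (fun P : ℝ => (1 - ε) * (1 + Real.log δ * (Real.log P)⁻¹))
          atTop (nhds (1 - ε)) := by
        have h1 : Tendsto (fun P : ℝ => 1 + Real.log δ * (Real.log P)⁻¹)
            atTop (nhds 1) := by
          have := (hloginv.const_mul (Real.log δ)).const_add 1
          simpa using this
        simpa using h1.const_mul (1 - ε)
      filter_upwards [htend.eventually_const_lt haε, eventually_ge_atTop (max 2 (1/δ)),
        hlogpos] with P h1 h2 h3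
      have hP2 : (2:ℝ) ≤ P := le_trans (le_max_left _ _) h2
      have hP1 : (1:ℝ) ≤ P := by linarith
      have hPδ : 1/δ ≤ P := le_trans (le_max_right _ _) h2
      have hPδ1 : 1 ≤ P * δ := by rw [div_le_iff₀ hδ0] at hPδ; linarith
      have hlog1 : 0 ≤ Real.log (P * δ) := Real.log_nonneg hPδ1
      have hIlow : (1 - ε) * Real.log (P * δ) ≤ I P := by
        calc (1 - ε) * Real.log (P * δ) ≤ (1 - m) * Real.log (P * δ) := by
              apply mul_le_mul_of_nonneg_right _ hlog1
              linarith
          _ ≤ I P := hlower δ hδ0 P hP1 hPδ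
      have hrw : (1 - ε) * (1 + Real.log δ * (Real.log P)⁻¹)
          = (1 - ε) * Real.log (P * δ) / Real.log P := by
        rw [Real.log_mul (by linarith) (ne_of_gt hδ0)]
        field_simp
        try ring
      calc a < (1 - ε) * (1 + Real.log δ * (Real.log P)⁻¹) := h1
        _ = (1 - ε) * Real.log (P * δ) / Real.log P := hrw
        _ ≤ I P / Real.log P := (div_le_div_iff_of_pos_right h3).2 hIlow
    · intro a ha
      have htend : Tendsto (fun P : ℝ => 1 + A * (Real.log P)⁻¹) atTop (nhds 1) := by
        have := (hloginv.const_mul A).const_add 1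
        simpa using this
      filter_upwards [htend.eventually_lt_const ha, eventually_ge_atTop 2, hlogpos]
        with P h1 h2 h3
      have hP1 : (1:ℝ) ≤ P := by linarith
      have : I P / Real.log P ≤ 1 + A * (Real.log P)⁻¹ := by
        rw [div_le_iff₀ h3]
        have heq : (1 + A * (Real.log P)⁻¹) * Real.log P = Real.log P + A := by
          field_simp
        rw [heq]
        exact hupper P hP1
      linarith
  -- conclude by squeezing R P / log P
  have hg2 : Tendsto (fun P : ℝ => c * (I P / Real.log P)) atTop (nhds c) := by
    simpa using key.const_mul c
  have hg1 : Tendsto (fun P : ℝ => c * (I P / Real.log P) - C * (Real.log P)⁻¹)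
      atTop (nhds c) := by
    have := hg2.sub (hloginv.const_mul C)
    simpa using this
  refine tendsto_of_tendsto_of_tendsto_of_le_of_le' hg1 hg2 ?_ ?_
  · filter_upwards [eventually_ge_atTop 2, hlogpos] with P hP hlp
    have h := (hR P (by linarith)).1
    have h2 : (c * I P - C) / Real.log P ≤ R P / Real.log P :=
      (div_le_div_iff_of_pos_right hlp).2 h
    calc c * (I P / Real.log P) - C * (Real.log P)⁻¹
        = (c * I P - C) / Real.log P := by ring
      _ ≤ R P / Real.log P := h2
  · filter_upwards [eventually_ge_atTop 2, hlogpos] with P hP hlp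
    have h := (hR P (by linarith)).2
    calc R P / Real.log P ≤ c * I P / Real.log P :=
          (div_le_div_iff_of_pos_right hlp).2 h
      _ = c * (I P / Real.log P) := by ring
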